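/- In the lower-bound construction: if a Σ-tree t contains at least two (nodes labelled with) symbols not in {σ₀, σ₁}, then ‖A‖(t) = 0. More precisely, for the automaton A = (2n, Σ, μ, γ) of the construction, if Σ_{σ ∈ Σ∖{σ₀,σ₁}} #_σ(t) ≥ 2 then μ(t) = 0 and hence ‖A‖(t) = 0. -/

import Mathlib

/-- Σ-trees over a ranked alphabet. -/
inductive RTree (Sig : Type) (rk : Sig → ℕ) : Type
  | node (σ : Sig) (ts : Fin (rk σ) → RTree Sig rk) : RTree Sig rk

/-- Extension of the tree representation `μ` to trees. -/
def mtaRun {Sig : Type} {rk : Sig → ℕ} {F : Type} [Field F] {S : Type} [Fintype S]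
    (μ : ∀ σ : Sig, Matrix (Fin (rk σ) → S) S F) : RTree Sig rk → S → F
  | .node σ ts => Matrix.vecMul (fun i => ∏ l, mtaRun μ (ts l) (i l)) (μ σ)

/-- The ranked alphabet of the lower-bound construction: nullary `σ₀`
(`Sum.inl false`), unary `σ₁` (`Sum.inl true`), and further symbols from `Sg`. -/
def rkA {Sg : Type} (rks : Sg → ℕ) : Bool ⊕ Sg → ℕ
  | .inl false => 0
  | .inl true => 1
  | .inr σ => rks σ

/-- `Σ_{σ ∈ Σ∖{σ₀,σ₁}} #_σ(t)`: the number of nodes of `t` labelled by symbols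
other than `σ₀`, `σ₁`. -/
def countOther {Sg : Type} {rks : Sg → ℕ} : RTree (Bool ⊕ Sg) (rkA rks) → ℕ
  | .node a ts =>
      (match a with | .inr _ => 1 | .inl _ => 0) + ∑ l, countOther (ts l)

lemma sum_rk_zero {M : Type*} [AddCommMonoid M] {m : ℕ} (h : m = 0) (f : Fin m → M) :
    ∑ l, f l = 0 := by subst h; simp

lemma sum_rk_one {M : Type*} [AddCommMonoid M] {m : ℕ} (h : m = 1) (f : Fin m → M) :
    ∑ l, f l = f ⟨0, h ▸ one_pos⟩ := by subst h; simp

lemma prod_rk_one {M : Type*} [CommMonoid M] {m : ℕ} (h : m = 1) (f : Fin m → M) :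
    ∏ l, f l = f ⟨0, h ▸ one_pos⟩ := by subst h; simp

lemma sum_fun_rk_one {M : Type*} [AddCommMonoid M] {S : Type} [Fintype S] {m : ℕ}
    (h : m = 1) (f : (Fin m → S) → M) : ∑ i, f i = ∑ p : S, f (fun _ => p) := by
  subst h
  rw [← (Equiv.funUnique (Fin 1) S).symm.sum_comp]
  rfl

lemma gen_inr {F : Type} [Field F] {n : ℕ} {k : ℕ}
    (run : Fin k → Fin 2 × Fin n → F) (Bf : (Fin k → Fin n) → F) :
    ∑ i : Fin k → Fin 2 × Fin n,
      (∏ l, run l (i l)) *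
        (∑ jv : Fin k → Fin n,
          (∏ l, if (i l).2 = jv l then (if (i l).1 = 0 then (1 : F) else -1) else 0) * Bf jv)
    = ∑ jv : Fin k → Fin n, (∏ l, (run l (0, jv l) - run l (1, jv l))) * Bf jv := by
  simp only [Finset.mul_sum]
  rw [Finset.sum_comm]
  refine Finset.sum_congr rfl fun jv _ => ?_
  have key : ∀ i : Fin k → Fin 2 × Fin n,
      (∏ l, run l (i l)) *
        ((∏ l, if (i l).2 = jv l then (if (i l).1 = 0 then (1 : F) else -1) else 0) * Bf jv)
      = (∏ l, run l (i l) *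
          (if (i l).2 = jv l then (if (i l).1 = 0 then (1 : F) else -1) else 0)) * Bf jv := by
    intro i
    rw [← mul_assoc, ← Finset.prod_mul_distrib]
  simp only [key]
  rw [← Finset.sum_mul]
  congr 1
  have hdiff : ∀ l : Fin k, run l (0, jv l) - run l (1, jv l)
      = ∑ p : Fin 2 × Fin n,
          run l p * (if p.2 = jv l then (if p.1 = 0 then (1 : F) else -1) else 0) := by
    intro l
    rw [Fintype.sum_prod_type, Fin.sum_univ_two]
    simp [mul_ite, Finset.sum_ite_eq']
    ring
  rw [show (∏ l, (run l (0, jv l) - run l (1, jv l)))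
      = ∏ l, ∑ p : Fin 2 × Fin n,
          run l p * (if p.2 = jv l then (if p.1 = 0 then (1 : F) else -1) else 0)
    from Finset.prod_congr rfl fun l _ => hdiff l]
  rw [Fintype.prod_sum]

lemma mtaRun_node {Sig : Type} {rk : Sig → ℕ} {F : Type} [Field F] {S : Type} [Fintype S]
    [DecidableEq S]
    (μ : ∀ σ : Sig, Matrix (Fin (rk σ) → S) S F) (a : Sig) (ts : Fin (rk a) → RTree Sig rk)
    (s : S) :
    mtaRun μ (.node a ts) s = ∑ i, (∏ l, mtaRun μ (ts l) (i l)) * μ a i s := by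
  simp [mtaRun, Matrix.vecMul, dotProduct]

section
variable {Sg : Type} {rks : Sg → ℕ} {F : Type} [Field F] {n : ℕ} [NeZero n]
variable (μ : ∀ a : Bool ⊕ Sg, Matrix (Fin (rkA rks a) → Fin 2 × Fin n) (Fin 2 × Fin n) F)

lemma run_true
    (hμ1 : μ (.inl true) =
      fun i s => if s.1 = (i ((0 : Fin 1))).1 ∧ s.2 = (i ((0 : Fin 1))).2 + 1 then 1 else 0)
    (ts : Fin (rkA rks (.inl true)) → RTree (Bool ⊕ Sg) (rkA rks))
    (s : Fin 2 × Fin n) :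
    mtaRun μ (.node (.inl true) ts) s = mtaRun μ (ts ⟨0, one_pos⟩) (s.1, s.2 - 1) := by
  rw [mtaRun_node, hμ1]
  rw [sum_fun_rk_one (rfl : rkA rks (.inl true) = 1)]
  simp only [prod_rk_one (rfl : rkA rks (.inl true) = 1)]
  rw [Fintype.sum_eq_single ((s.1, s.2 - 1) : Fin 2 × Fin n)]
  · simp [sub_add_cancel]
  · intro p hp
    have hcond : ¬ (s.1 = p.1 ∧ s.2 = p.2 + 1) := by
      rintro ⟨h1, h2⟩
      apply hp
      have : p.2 = s.2 - 1 := by rw [h2, add_sub_cancel_right]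
      exact Prod.ext h1.symm this
    simp [hcond]

lemma run_inr
    (B : ∀ σ : Sg, Matrix (Fin (rks σ) → Fin n) (Fin n) F)
    (hμ2 : ∀ σ : Sg, μ (.inr σ) =
      fun i s =>
        ∑ jv : Fin (rks σ) → Fin n,
          (∏ l, if (i l).2 = jv l then (if (i l).1 = 0 then (1 : F) else -1) else 0) *
            B σ jv s.2)
    (σ : Sg) (ts : Fin (rkA rks (.inr σ)) → RTree (Bool ⊕ Sg) (rkA rks))
    (s : Fin 2 × Fin n) :
    mtaRun μ (.node (.inr σ) ts) s =
      ∑ jv : Fin (rks σ) → Fin n,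
        (∏ l, (mtaRun μ (ts l) (0, jv l) - mtaRun μ (ts l) (1, jv l))) * B σ jv s.2 := by
  rw [mtaRun_node, hμ2]
  exact gen_inr (fun l => mtaRun μ (ts l)) (fun jv => B σ jv s.2)

lemma key_balance
    (hμ1 : μ (.inl true) =
      fun i s => if s.1 = (i ((0 : Fin 1))).1 ∧ s.2 = (i ((0 : Fin 1))).2 + 1 then 1 else 0)
    (B : ∀ σ : Sg, Matrix (Fin (rks σ) → Fin n) (Fin n) F)
    (hμ2 : ∀ σ : Sg, μ (.inr σ) =
      fun i s =>
        ∑ jv : Fin (rks σ) → Fin n,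
          (∏ l, if (i l).2 = jv l then (if (i l).1 = 0 then (1 : F) else -1) else 0) *
            B σ jv s.2)
    (t : RTree (Bool ⊕ Sg) (rkA rks)) :
    (1 ≤ countOther t → ∀ x : Fin n, mtaRun μ t (1, x) = mtaRun μ t (0, x)) ∧
      (2 ≤ countOther t → mtaRun μ t = 0) := by
  induction t with
  | node a ts ih =>
    match a with
    | .inl false =>
      have hc : countOther (RTree.node (Sum.inl false) ts) = 0 := by
        simp only [countOther]
        rw [sum_rk_zero (rfl : rkA rks (.inl false) = 0)]
        omega
      constructor <;> intro h <;> omega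
    | .inl true =>
      have hc : countOther (RTree.node (Sum.inl true) ts) = countOther (ts ⟨0, one_pos⟩) := by
        simp only [countOther]
        rw [sum_rk_one (rfl : rkA rks (.inl true) = 1)]
        omega
      constructor
      · intro h x
        rw [run_true μ hμ1, run_true μ hμ1]
        exact (ih _).1 (by omega) _
      · intro h
        funext s
        rw [run_true μ hμ1, (ih _).2 (by omega)]
        rfl
    | .inr σ =>
      have hc : countOther (RTree.node (Sum.inr σ) ts) = 1 + ∑ l, countOther (ts l) := by
        simp only [countOther]
      constructor
      · intro _ x
        rw [run_inr μ B hμ2, run_inr μ B hμ2]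
      · intro h
        have h2 : ∑ l, countOther (ts l) ≠ 0 := by omega
        obtain ⟨l, -, hl⟩ := Finset.exists_ne_zero_of_sum_ne_zero h2
        have hbal := (ih l).1 (by omega)
        funext s
        rw [run_inr μ B hμ2]
        refine Finset.sum_eq_zero fun jv _ => ?_
        have hz : (∏ l, (mtaRun μ (ts l) (0, jv l) - mtaRun μ (ts l) (1, jv l))) = 0 :=
          Finset.prod_eq_zero (Finset.mem_univ l) (by rw [hbal]; ring)
        rw [hz, zero_mul]

end

/-- in the lower-bound construction, if a tree `t` contains at
least two nodes labelled by symbols outside `{σ₀, σ₁}`, then `μ(t) = 0` and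
hence `‖A‖(t) = 0`. -/
theorem lower_bound_weight_zero {Sg : Type} (rks : Sg → ℕ) {F : Type}
    [Field F] (n : ℕ) [NeZero n]
    (μ : ∀ a : Bool ⊕ Sg, Matrix (Fin (rkA rks a) → Fin 2 × Fin n) (Fin 2 × Fin n) F)
    (B : ∀ σ : Sg, Matrix (Fin (rks σ) → Fin n) (Fin n) F)
    (hμ0 : μ (.inl false) =
      fun _ s => if s.1 = 0 ∧ s.2 = 0 then 1 else 0)
    (hμ1 : μ (.inl true) =
      fun i s => if s.1 = (i ((0 : Fin 1))).1 ∧ s.2 = (i ((0 : Fin 1))).2 + 1 then 1 else 0)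
    (hμ2 : ∀ σ : Sg, μ (.inr σ) =
      fun i s =>
        ∑ jv : Fin (rks σ) → Fin n,
          (∏ l, if (i l).2 = jv l then (if (i l).1 = 0 then (1 : F) else -1) else 0) *
            B σ jv s.2)
    (t : RTree (Bool ⊕ Sg) (rkA rks)) (ht : 2 ≤ countOther t) :
    mtaRun μ t = 0 ∧
      (∑ s, mtaRun μ t s * (if s.1 = 0 ∧ s.2 = 0 then (1 : F) else 0)) = 0 := by
  exact ⟨(key_balance μ hμ1 B hμ2 t).2 ht, by simp [(key_balance μ hμ1 B hμ2 t).2 ht]⟩
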